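/- Let P = (X,≺) be a finite poset, z₁ ≺ z₂ ≺ z₃ distinct elements, and let S = {(k,ℓ) ∈ ℕ² : F(k,ℓ) > 0} be the support of F. If F(k+1,ℓ)·F(k,ℓ+1) = 0 for some k,ℓ ≥ 1, then F(k,ℓ)·F(k+1,ℓ+1) = 0. -/

import Mathlib

set_option linter.unusedSectionVars false
set_option maxHeartbeats 1000000
open Finset

section VE
variable {X : Type} [PartialOrder X] [Fintype X] [DecidableEq X]
variable [DecidableRel ((· < ·) : X → X → Prop)]

def IsIdeal (B : Finset X) : Prop := ∀ ⦃x y : X⦄, y ∈ B → x < y → x ∈ B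

/-- From a suitable chain of ideals, build a linear extension with prescribed positions. -/
lemma exists_ext (z₁ z₂ z₃ : X) (J0 J1 J2 J3 J4 J5 : Finset X)
    (i0 : IsIdeal J0) (i1 : IsIdeal J1) (i2 : IsIdeal J2)
    (i3 : IsIdeal J3) (i4 : IsIdeal J4) (i5 : IsIdeal J5)
    (s01 : J0 ⊆ J1) (s12 : J1 ⊆ J2) (s23 : J2 ⊆ J3) (s34 : J3 ⊆ J4) (s45 : J4 ⊆ J5)
    (hz1 : z₁ ∉ J0) (hJ1 : J1 = insert z₁ J0)
    (hz2 : z₂ ∉ J2) (hJ3 : J3 = insert z₂ J2)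
    (hz3 : z₃ ∉ J4) (hJ5 : J5 = insert z₃ J4) :
    ∃ L : X ≃ Fin (Fintype.card X), (∀ a b : X, a < b → L a < L b) ∧
      (L z₁ : ℕ) = J0.card ∧ (L z₂ : ℕ) = J2.card ∧ (L z₃ : ℕ) = J4.card := by
  set n := Fintype.card X with hn
  have hn1 : 1 ≤ n := Fintype.card_pos_iff.mpr ⟨z₁⟩
  set f : X ≃ Fin n := Fintype.equivFin X with hf
  set h : X → ℕ := fun x => (univ.filter (fun y => y < x)).card with hh
  have hlt : ∀ {x y : X}, x < y → h x < h y := by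
    intro x y hxy
    apply Finset.card_lt_card
    constructor
    · intro t ht
      simp only [Finset.mem_filter] at ht ⊢
      exact ⟨ht.1, ht.2.trans hxy⟩
    · intro hsub
      have := hsub (Finset.mem_filter.mpr ⟨Finset.mem_univ x, hxy⟩)
      simp at this
  have hbound : ∀ x : X, h x < n := by
    intro x
    have : univ.filter (fun y => y < x) ⊂ univ := by
      constructor
      · exact Finset.filter_subset _ _
      · intro hsub
        have := hsub (Finset.mem_univ x)
        simp at this
    simpa [hn] using Finset.card_lt_card this
  -- the block function
  set blk : X → ℕ := fun x =>
    (if x ∈ J0 then 0 else 1) + (if x ∈ J1 then 0 else 1) + (if x ∈ J2 then 0 else 1)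
      + (if x ∈ J3 then 0 else 1) + (if x ∈ J4 then 0 else 1) + (if x ∈ J5 then 0 else 1)
    with hblk
  have summand_mono : ∀ (J : Finset X), IsIdeal J → ∀ {x y : X}, x < y →
      (if x ∈ J then 0 else 1) ≤ (if y ∈ J then (0:ℕ) else 1) := by
    intro J hJ x y hxy
    by_cases hy : y ∈ J
    · have hx : x ∈ J := hJ hy hxy
      simp [hx, hy]
    · split_ifs <;> omega
  have blk_mono : ∀ {x y : X}, x < y → blk x ≤ blk y := by
    intro x y hxy
    simp only [hblk]
    gcongr <;>
      first
        | exact summand_mono J0 i0 hxy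
        | exact summand_mono J1 i1 hxy
        | exact summand_mono J2 i2 hxy
        | exact summand_mono J3 i3 hxy
        | exact summand_mono J4 i4 hxy
        | exact summand_mono J5 i5 hxy
  -- blk values and characterizations
  have blk_le5 : ∀ x, x ∈ J5 → blk x ≤ 5 := by
    intro x hx; simp only [hblk, hx]; split_ifs <;> omega
  have blk_ge : ∀ x (k : ℕ), (k = 1 → x ∉ J0) → (k = 2 → x ∉ J1) → (k = 3 → x ∉ J2) →
      (k = 4 → x ∉ J3) → True → k ≤ 6 → True := fun _ _ _ _ _ _ _ _ => trivial
  -- memberships of the special points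
  have m1 : z₁ ∈ J1 := by rw [hJ1]; exact Finset.mem_insert_self _ _
  have m2 : z₂ ∈ J3 := by rw [hJ3]; exact Finset.mem_insert_self _ _
  have m3 : z₃ ∈ J5 := by rw [hJ5]; exact Finset.mem_insert_self _ _
  have z2n1 : z₂ ∉ J1 := fun hc => hz2 (s12 hc)
  have z2n0 : z₂ ∉ J0 := fun hc => z2n1 (s01 hc)
  have z3n3 : z₃ ∉ J3 := fun hc => hz3 (s34 hc)
  have z3n2 : z₃ ∉ J2 := fun hc => z3n3 (s23 hc)
  have z3n1 : z₃ ∉ J1 := fun hc => z3n2 (s12 hc)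
  have z3n0 : z₃ ∉ J0 := fun hc => z3n1 (s01 hc)
  have bv1 : blk z₁ = 1 := by
    simp [hblk, hz1, m1, s12 m1, s23 (s12 m1), s34 (s23 (s12 m1)), s45 (s34 (s23 (s12 m1)))]
  have bv2 : blk z₂ = 3 := by
    simp [hblk, z2n0, z2n1, hz2, m2, s34 m2, s45 (s34 m2)]
  have bv3 : blk z₃ = 5 := by
    simp [hblk, z3n0, z3n1, z3n2, z3n3, hz3, m3]
  -- blk x ≤ k → x ∈ Jk (k = 0, 2, 4)
  have inv0 : ∀ x, blk x ≤ 0 → x ∈ J0 := by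
    intro x hx
    by_contra hc
    have : 1 ≤ blk x := by
      simp only [hblk, if_neg hc]
      split_ifs <;> omega
    omega
  have inv2 : ∀ x, blk x ≤ 2 → x ∈ J2 := by
    intro x hx
    by_contra hc
    have hc1 : x ∉ J1 := fun hm => hc (s12 hm)
    have hc0 : x ∉ J0 := fun hm => hc1 (s01 hm)
    have : 3 ≤ blk x := by
      simp only [hblk, if_neg hc, if_neg hc0, if_neg hc1]
      split_ifs <;> omega
    omega
  have inv4 : ∀ x, blk x ≤ 4 → x ∈ J4 := by
    intro x hx
    by_contra hc
    have hc2 : x ∉ J2 := fun hm => hc (s34 (s23 hm))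
    have hc3 : x ∉ J3 := fun hm => hc (s34 hm)
    have hc1 : x ∉ J1 := fun hm => hc2 (s12 hm)
    have hc0 : x ∉ J0 := fun hm => hc1 (s01 hm)
    have : 5 ≤ blk x := by
      simp only [hblk, if_neg hc, if_neg hc0, if_neg hc1, if_neg hc2, if_neg hc3]
      split_ifs <;> omega
    omega
  have mem0 : ∀ x, x ∈ J0 → blk x = 0 := by
    intro x hx
    simp [hblk, hx, s01 hx, s12 (s01 hx), s23 (s12 (s01 hx)), s34 (s23 (s12 (s01 hx))),
      s45 (s34 (s23 (s12 (s01 hx))))]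
  have mem2 : ∀ x, x ∈ J2 → blk x ≤ 2 := by
    intro x hx
    simp only [hblk, if_pos hx, if_pos (s23 hx), if_pos (s34 (s23 hx)), if_pos (s45 (s34 (s23 hx)))]
    split_ifs <;> omega
  have mem4 : ∀ x, x ∈ J4 → blk x ≤ 4 := by
    intro x hx
    simp only [hblk, if_pos hx, if_pos (s45 hx)]
    split_ifs <;> omega
  -- the key function
  set kap : X → ℕ := fun x => blk x * (n * n) + h x * n + (f x : ℕ) with hkap
  have kap_mono : ∀ {x y : X}, x < y → kap x < kap y := by
    intro x y hxy
    have h1 : blk x ≤ blk y := blk_mono hxy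
    have h2 : h x < h y := hlt hxy
    have h3 : (f x : ℕ) < n := (f x).2
    have t1 : h x * n + 1 * n ≤ h y * n := by
      rw [← Nat.add_mul]; exact Nat.mul_le_mul_right n (by omega)
    have t2 : blk x * (n*n) ≤ blk y * (n*n) := Nat.mul_le_mul_right _ h1
    simp only [hkap]
    have t3 : (0:ℕ) ≤ (f y : ℕ) := Nat.zero_le _
    linarith
  have blk_lt_kap : ∀ {x y : X}, blk x < blk y → kap x < kap y := by
    intro x y hb
    have h3 : (f x : ℕ) < n := (f x).2
    have h4 : h x < n := hbound x
    have t1 : h x * n + (f x : ℕ) + 1 ≤ n * n := by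
      have : h x * n + 1 * n ≤ n * n := by
        rw [← Nat.add_mul]; exact Nat.mul_le_mul_right n (by omega)
      omega
    have t2 : blk x * (n*n) + 1 * (n*n) ≤ blk y * (n*n) := by
      rw [← Nat.add_mul]; exact Nat.mul_le_mul_right _ (by omega)
    simp only [hkap]
    have t3 : (0:ℕ) ≤ h y * n + (f y : ℕ) := Nat.zero_le _
    linarith
  have kap_inj : Function.Injective kap := by
    intro x y hxy
    have hb : blk x = blk y := by
      by_contra hne
      rcases lt_or_gt_of_ne hne with h' | h'
      · exact absurd hxy (Nat.ne_of_lt (blk_lt_kap h'))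
      · exact absurd hxy.symm (Nat.ne_of_lt (blk_lt_kap h'))
    have hhlt : ∀ {u v : X}, blk u = blk v → h u < h v → kap u < kap v := by
      intro u v hbe hh'
      have h3 : (f u : ℕ) < n := (f u).2
      have t1 : h u * n + 1 * n ≤ h v * n := by
        rw [← Nat.add_mul]; exact Nat.mul_le_mul_right n (by omega)
      simp only [hkap, hbe]
      have t3 : (0:ℕ) ≤ (f v : ℕ) := Nat.zero_le _
      linarith
    have hh : h x = h y := by
      by_contra hne
      rcases lt_or_gt_of_ne hne with h' | h'
      · exact absurd hxy (Nat.ne_of_lt (hhlt hb h'))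
      · exact absurd hxy.symm (Nat.ne_of_lt (hhlt hb.symm h'))
    have hfv : (f x : ℕ) = (f y : ℕ) := by
      simp only [hkap, hb, hh] at hxy
      omega
    exact f.injective (Fin.val_injective hfv)
  have kap_blk_le : ∀ {x y : X}, kap x < kap y → blk x ≤ blk y := by
    intro x y hk
    by_contra hc
    push_neg at hc
    exact absurd hk (Nat.lt_asymm (blk_lt_kap hc))
  -- position function
  set pos : X → ℕ := fun x => (univ.filter (fun y => kap y < kap x)).card with hpos
  have pos_lt : ∀ x, pos x < n := by
    intro x
    have : univ.filter (fun y => kap y < kap x) ⊂ univ := by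
      constructor
      · exact Finset.filter_subset _ _
      · intro hsub
        have := hsub (Finset.mem_univ x)
        simp at this
    simpa [hn] using Finset.card_lt_card this
  have pos_mono : ∀ {x y : X}, kap x < kap y → pos x < pos y := by
    intro x y hk
    apply Finset.card_lt_card
    constructor
    · intro t ht
      simp only [Finset.mem_filter] at ht ⊢
      exact ⟨ht.1, ht.2.trans hk⟩
    · intro hsub
      have := hsub (Finset.mem_filter.mpr ⟨Finset.mem_univ x, hk⟩)
      simp at this
  set Lf : X → Fin n := fun x => ⟨pos x, pos_lt x⟩ with hLf
  have Lf_inj : Function.Injective Lf := by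
    intro x y hxy
    by_contra hne
    have hk : kap x ≠ kap y := fun hc => hne (kap_inj hc)
    rcases lt_or_gt_of_ne hk with hlt' | hlt'
    · have := pos_mono hlt'
      have : (Lf x : ℕ) < (Lf y : ℕ) := this
      rw [hxy] at this
      omega
    · have := pos_mono hlt'
      have : (Lf y : ℕ) < (Lf x : ℕ) := this
      rw [hxy] at this
      omega
  have Lf_bij : Function.Bijective Lf :=
    (Fintype.bijective_iff_injective_and_card Lf).mpr ⟨Lf_inj, by simp [hn]⟩
  set L : X ≃ Fin n := Equiv.ofBijective Lf Lf_bij with hL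
  have hLval : ∀ x, (L x : ℕ) = pos x := fun x => rfl
  refine ⟨L, ?_, ?_, ?_, ?_⟩
  · intro a b hab
    have : pos a < pos b := pos_mono (kap_mono hab)
    exact this
  · -- L z₁ = J0.card
    rw [hLval]
    have hset : univ.filter (fun y => kap y < kap z₁) = J0 := by
      ext y
      simp only [Finset.mem_filter, Finset.mem_univ, true_and]
      constructor
      · intro hy
        have hble : blk y ≤ 1 := by rw [← bv1]; exact kap_blk_le hy
        rcases Nat.lt_or_ge (blk y) 1 with hb0 | hb1
        · exact inv0 y (by omega)
        · have hbeq : blk y = 1 := by omega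
          have hyJ1 : y ∈ J1 := by
            by_contra hc
            have hc0 : y ∉ J0 := fun hm => hc (s01 hm)
            have : 2 ≤ blk y := by
              simp only [hblk, if_neg hc, if_neg hc0]
              split_ifs <;> omega
            omega
          have : y = z₁ := by
            rw [hJ1] at hyJ1
            rcases Finset.mem_insert.mp hyJ1 with h' | h'
            · exact h'
            · exact absurd (mem0 y h') (by omega)
          subst this
          simp at hy
      · intro hy
        exact blk_lt_kap (by rw [mem0 y hy, bv1]; omega)
    rw [hpos]
    simp only []
    rw [hset]
  · rw [hLval]
    have hset : univ.filter (fun y => kap y < kap z₂) = J2 := by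
      ext y
      simp only [Finset.mem_filter, Finset.mem_univ, true_and]
      constructor
      · intro hy
        have hble : blk y ≤ 3 := by rw [← bv2]; exact kap_blk_le hy
        rcases Nat.lt_or_ge (blk y) 3 with hb0 | hb1
        · exact inv2 y (by omega)
        · have hbeq : blk y = 3 := by omega
          have hyJ3 : y ∈ J3 := by
            by_contra hc
            have hc2 : y ∉ J2 := fun hm => hc (s23 hm)
            have hc1 : y ∉ J1 := fun hm => hc2 (s12 hm)
            have hc0 : y ∉ J0 := fun hm => hc1 (s01 hm)
            have : 4 ≤ blk y := by
              simp only [hblk, if_neg hc, if_neg hc0, if_neg hc1, if_neg hc2]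
              split_ifs <;> omega
            omega
          have : y = z₂ := by
            rw [hJ3] at hyJ3
            rcases Finset.mem_insert.mp hyJ3 with h' | h'
            · exact h'
            · exact absurd (mem2 y h') (by omega)
          subst this
          simp at hy
      · intro hy
        exact blk_lt_kap (by have := mem2 y hy; omega)
    rw [hpos]
    simp only []
    rw [hset]
  · rw [hLval]
    have hset : univ.filter (fun y => kap y < kap z₃) = J4 := by
      ext y
      simp only [Finset.mem_filter, Finset.mem_univ, true_and]
      constructor
      · intro hy
        have hble : blk y ≤ 5 := by rw [← bv3]; exact kap_blk_le hy
        rcases Nat.lt_or_ge (blk y) 5 with hb0 | hb1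
        · exact inv4 y (by omega)
        · have hbeq : blk y = 5 := by omega
          have hyJ5 : y ∈ J5 := by
            by_contra hc
            have hc4 : y ∉ J4 := fun hm => hc (s45 hm)
            have hc3 : y ∉ J3 := fun hm => hc4 (s34 hm)
            have hc2 : y ∉ J2 := fun hm => hc3 (s23 hm)
            have hc1 : y ∉ J1 := fun hm => hc2 (s12 hm)
            have hc0 : y ∉ J0 := fun hm => hc1 (s01 hm)
            have : 6 ≤ blk y := by
              simp only [hblk, if_neg hc, if_neg hc0, if_neg hc1, if_neg hc2, if_neg hc3,
                if_neg hc4]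
              omega
            omega
          have : y = z₃ := by
            rw [hJ5] at hyJ5
            rcases Finset.mem_insert.mp hyJ5 with h' | h'
            · exact h'
            · exact absurd (mem4 y h') (by omega)
          subst this
          simp at hy
      · intro hy
        exact blk_lt_kap (by have := mem4 y hy; omega)
    rw [hpos]
    simp only []
    rw [hset]

structure Cond (z₁ z₂ z₃ : X) (a b : ℕ) (B : Finset X) : Prop where
  mem : z₂ ∈ B
  cap : ∀ y ∈ B, ¬ z₂ < y
  c3 : (B.filter (fun y => z₁ < y)).card ≤ a
  c4 : a + (univ.filter (fun y => y < z₁)).card + 1 ≤ B.card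
  c5 : B.card + (univ.filter (fun y => z₃ < y)).card + b ≤ Fintype.card X
  c6 : (univ.filter (fun y => y < z₃)).card + 1 ≤ (B.filter (fun y => y < z₃)).card + b

lemma exists_ideal_card_between :
    ∀ (d : ℕ) (P Q : Finset X), IsIdeal P → IsIdeal Q → P ⊆ Q → P.card + d ≤ Q.card →
    ∃ R : Finset X, IsIdeal R ∧ P ⊆ R ∧ R ⊆ Q ∧ R.card = P.card + d := by
  intro d
  induction d with
  | zero => intro P Q hP _ hPQ _; exact ⟨P, hP, le_refl _, hPQ, by simp⟩
  | succ d ih =>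
    intro P Q hP hQ hPQ hcard
    obtain ⟨R, hR, hPR, hRQ, hcR⟩ := ih P Q hP hQ hPQ (by omega)
    have hne : (Q \ R).Nonempty := by
      rw [Finset.sdiff_nonempty]
      intro hsub
      have := Finset.card_le_card hsub
      omega
    obtain ⟨y, hy, hymin⟩ : ∃ y ∈ Q \ R, ∀ x ∈ Q \ R, ¬ x < y :=
      let ⟨y, hm⟩ := Finset.exists_minimal hne; ⟨y, hm.prop, fun x hx => hm.not_lt hx⟩
    have hyQ : y ∈ Q := (Finset.mem_sdiff.mp hy).1
    have hyR : y ∉ R := (Finset.mem_sdiff.mp hy).2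
    refine ⟨insert y R, ?_, hPR.trans (Finset.subset_insert _ _), Finset.insert_subset hyQ hRQ, ?_⟩
    · intro x w hw hxw
      rcases Finset.mem_insert.mp hw with rfl | hwR
      · have hxQ : x ∈ Q := hQ hyQ hxw
        by_cases hxR : x ∈ R
        · exact Finset.mem_insert_of_mem hxR
        · exact absurd hxw (hymin x (Finset.mem_sdiff.mpr ⟨hxQ, hxR⟩))
      · exact Finset.mem_insert_of_mem (hR hwR hxw)
    · rw [Finset.card_insert_of_notMem hyR]; omega

/-- From a good capped ideal, get a linear extension with the prescribed gaps. -/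
lemma cond_to_ext (z₁ z₂ z₃ : X) (h12 : z₁ < z₂) (h23 : z₂ < z₃) (a b : ℕ)
    (B : Finset X) (hB : IsIdeal B) (hc : Cond z₁ z₂ z₃ a b B) :
    ∃ L : X ≃ Fin (Fintype.card X), (∀ x y : X, x < y → L x < L y) ∧
      (L z₂ : ℕ) = (L z₁ : ℕ) + a ∧ (L z₃ : ℕ) = (L z₂ : ℕ) + b := by
  obtain ⟨hmem, hcap, hc3, hc4, hc5, hc6⟩ := hc
  set n := Fintype.card X with hn
  have hz1B : z₁ ∈ B := hB hmem h12
  have hz3B : z₃ ∉ B := fun hc' => hcap z₃ hc' h23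
  -- the A-side
  set A₀ : Finset X := insert z₁ (univ.filter (fun y => y < z₁)) with hA₀
  set Astar : Finset X := B.filter (fun y => ¬ z₁ < y) with hAstar
  have hA₀card : A₀.card = (univ.filter (fun y => y < z₁)).card + 1 := by
    rw [hA₀, Finset.card_insert_of_notMem (by simp)]
  have hA₀sub : A₀ ⊆ Astar := by
    intro y hy
    rcases Finset.mem_insert.mp hy with rfl | hy'
    · exact Finset.mem_filter.mpr ⟨hz1B, lt_irrefl _⟩
    · have hy'' : y < z₁ := (Finset.mem_filter.mp hy').2
      exact Finset.mem_filter.mpr ⟨hB hz1B hy'', by intro hcon; exact absurd (hcon.trans hy'') (lt_irrefl _)⟩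
  have hA₀ideal : IsIdeal A₀ := by
    intro x w hw hxw
    rcases Finset.mem_insert.mp hw with rfl | hw'
    · exact Finset.mem_insert_of_mem (by simp [hxw])
    · exact Finset.mem_insert_of_mem (by simp [hxw.trans (Finset.mem_filter.mp hw').2])
  have hAstarIdeal : IsIdeal Astar := by
    intro x w hw hxw
    have h1 := Finset.mem_filter.mp hw
    refine Finset.mem_filter.mpr ⟨hB h1.1 hxw, ?_⟩
    intro hcon
    exact h1.2 (hcon.trans hxw)
  have hAstarcard : (B.filter (fun y => z₁ < y)).card + Astar.card = B.card := by
    rw [hAstar]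
    have := Finset.card_filter_add_card_filter_not (s := B) (p := fun y => z₁ < y)
    simpa using this
  have haB : a ≤ B.card := by omega
  obtain ⟨A, hAideal, hAsub0, hAsubstar, hAcard⟩ :=
    exists_ideal_card_between (B.card - a - A₀.card) A₀ Astar hA₀ideal hAstarIdeal hA₀sub
      (by omega)
  have hAcard' : A.card + a = B.card := by omega
  have hz1A : z₁ ∈ A := hAsub0 (Finset.mem_insert_self _ _)
  have hAnogt : ∀ y ∈ A, ¬ z₁ < y := fun y hy => (Finset.mem_filter.mp (hAsubstar hy)).2
  -- the C-side
  set C₀ : Finset X := insert z₃ (B ∪ univ.filter (fun y => y < z₃)) with hC₀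
  set Cstar : Finset X := univ.filter (fun y => ¬ z₃ < y) with hCstar
  have hC₀ideal : IsIdeal C₀ := by
    intro x w hw hxw
    rcases Finset.mem_insert.mp hw with rfl | hw'
    · exact Finset.mem_insert_of_mem (Finset.mem_union_right _ (by simp [hxw]))
    · rcases Finset.mem_union.mp hw' with hw'' | hw''
      · exact Finset.mem_insert_of_mem (Finset.mem_union_left _ (hB hw'' hxw))
      · exact Finset.mem_insert_of_mem (Finset.mem_union_right _
          (by simp [hxw.trans (Finset.mem_filter.mp hw'').2]))
  have hCstarIdeal : IsIdeal Cstar := by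
    intro x w hw hxw
    refine Finset.mem_filter.mpr ⟨Finset.mem_univ _, ?_⟩
    intro hcon
    exact (Finset.mem_filter.mp hw).2 (hcon.trans hxw)
  have hC₀sub : C₀ ⊆ Cstar := by
    intro y hy
    refine Finset.mem_filter.mpr ⟨Finset.mem_univ _, ?_⟩
    rcases Finset.mem_insert.mp hy with rfl | hy'
    · exact lt_irrefl _
    · rcases Finset.mem_union.mp hy' with hy'' | hy''
      · intro hcon; exact hcap y hy'' (h23.trans hcon)
      · intro hcon; exact absurd (hcon.trans (Finset.mem_filter.mp hy'').2) (lt_irrefl _)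
  have hCstarcard : (univ.filter (fun y => z₃ < y)).card + Cstar.card = n := by
    rw [hCstar]
    have := Finset.card_filter_add_card_filter_not (s := (univ : Finset X))
      (p := fun y => z₃ < y)
    simpa [hn] using this
  have hinter : B ∩ univ.filter (fun y => y < z₃) = B.filter (fun y => y < z₃) := by
    ext y; simp [Finset.mem_filter, Finset.mem_inter, and_comm]
  have hunioncard : (B ∪ univ.filter (fun y => y < z₃)).card + (B.filter (fun y => y < z₃)).card
      = B.card + (univ.filter (fun y => y < z₃)).card := by
    rw [← hinter]
    exact Finset.card_union_add_card_inter _ _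
  have hz3notU : z₃ ∉ B ∪ univ.filter (fun y => y < z₃) := by
    intro hcon
    rcases Finset.mem_union.mp hcon with h' | h'
    · exact hz3B h'
    · exact absurd (Finset.mem_filter.mp h').2 (lt_irrefl _)
  have hC₀card : C₀.card = (B ∪ univ.filter (fun y => y < z₃)).card + 1 :=
    Finset.card_insert_of_notMem hz3notU
  have hBsubC₀ : B ⊆ C₀ := fun y hy => Finset.mem_insert_of_mem (Finset.mem_union_left _ hy)
  obtain ⟨C, hCideal, hCsub0, hCsubstar, hCcard⟩ :=
    exists_ideal_card_between (B.card + b - C₀.card) C₀ Cstar hC₀ideal hCstarIdeal hC₀sub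
      (by omega)
  have hCcard' : C.card = B.card + b := by omega
  have hz3C : z₃ ∈ C := hCsub0 (Finset.mem_insert_self _ _)
  have hBsubC : B ⊆ C := hBsubC₀.trans hCsub0
  have hCnogt : ∀ y ∈ C, ¬ z₃ < y := fun y hy => (Finset.mem_filter.mp (hCsubstar hy)).2
  -- assemble the chain
  have hz2A : z₂ ∉ A := fun hcon => hAnogt z₂ hcon h12
  have hz3Berase : z₃ ∉ B := hz3B
  obtain ⟨L, hmono, e1, e2, e3⟩ := exists_ext z₁ z₂ z₃ (A.erase z₁) A (B.erase z₂) B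
    (C.erase z₃) C
    (by intro x w hw hxw
        have hwA : w ∈ A := Finset.mem_of_mem_erase hw
        refine Finset.mem_erase.mpr ⟨?_, hAideal hwA hxw⟩
        rintro rfl
        exact hAnogt w hwA hxw)
    hAideal
    (by intro x w hw hxw
        have hwB : w ∈ B := Finset.mem_of_mem_erase hw
        refine Finset.mem_erase.mpr ⟨?_, hB hwB hxw⟩
        rintro rfl
        exact hcap w hwB hxw)
    hB
    (by intro x w hw hxw
        have hwC : w ∈ C := Finset.mem_of_mem_erase hw
        refine Finset.mem_erase.mpr ⟨?_, hCideal hwC hxw⟩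
        rintro rfl
        exact hCnogt w hwC hxw)
    hCideal
    (Finset.erase_subset _ _)
    (by intro y hy
        refine Finset.mem_erase.mpr ⟨?_, (hAsubstar.trans (Finset.filter_subset _ _)) hy⟩
        rintro rfl
        exact hz2A hy)
    (Finset.erase_subset _ _)
    (by intro y hy
        refine Finset.mem_erase.mpr ⟨?_, hBsubC hy⟩
        rintro rfl
        exact hz3B hy)
    (Finset.erase_subset _ _)
    (Finset.notMem_erase _ _)
    (Finset.insert_erase hz1A).symm
    (Finset.notMem_erase _ _)
    (Finset.insert_erase hmem).symm
    (Finset.notMem_erase _ _)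
    (Finset.insert_erase hz3C).symm
  refine ⟨L, hmono, ?_, ?_⟩
  · rw [e1, e2, Finset.card_erase_of_mem hz1A, Finset.card_erase_of_mem hmem]
    have hA1 : 1 ≤ A.card := Finset.card_pos.mpr ⟨z₁, hz1A⟩
    omega
  · rw [e2, e3, Finset.card_erase_of_mem hmem, Finset.card_erase_of_mem hz3C]
    have hB1 : 1 ≤ B.card := Finset.card_pos.mpr ⟨z₂, hmem⟩
    omega

/-- From a linear extension with given gaps, extract a good capped ideal. -/
lemma ext_to_cond (z₁ z₂ z₃ : X) (h12 : z₁ < z₂) (h23 : z₂ < z₃) (a b : ℕ) (hb : 1 ≤ b)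
    (L : X ≃ Fin (Fintype.card X)) (hmono : ∀ x y : X, x < y → L x < L y)
    (e2 : (L z₂ : ℕ) = (L z₁ : ℕ) + a) (e3 : (L z₃ : ℕ) = (L z₂ : ℕ) + b) :
    ∃ B : Finset X, IsIdeal B ∧ Cond z₁ z₂ z₃ a b B := by
  set B : Finset X := univ.filter (fun x => (L x : ℕ) ≤ (L z₂ : ℕ)) with hBdef
  have hmemB : ∀ {x : X}, x ∈ B ↔ (L x : ℕ) ≤ (L z₂ : ℕ) := by
    intro x; simp [hBdef]
  have hBideal : IsIdeal B := by
    intro x w hw hxw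
    exact hmemB.mpr (le_trans (le_of_lt (hmono x w hxw)) (hmemB.mp hw))
  -- position identity
  have posid : ∀ x : X, (univ.filter (fun y => (L y : ℕ) < (L x : ℕ))).card = (L x : ℕ) := by
    intro x
    have hcb : (univ.filter (fun y => (L y : ℕ) < (L x : ℕ))).card
        = ((univ : Finset (Fin (Fintype.card X))).filter (fun j => j < L x)).card := by
      apply Finset.card_bij (fun y _ => L y)
      · intro y hy
        simp only [Finset.mem_filter, Finset.mem_univ, true_and] at hy ⊢
        exact hy
      · intro y1 h1 y2 h2 he
        exact L.injective he
      · intro j hj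
        refine ⟨L.symm j, ?_, by simp⟩
        simp only [Finset.mem_filter, Finset.mem_univ, true_and] at hj ⊢
        simpa using hj
    rw [hcb]
    rw [show ((univ : Finset (Fin (Fintype.card X))).filter (fun j => j < L x)) = Finset.Iio (L x) by
      ext i; simp]
    simp
  have hLz3lt : (L z₃ : ℕ) < Fintype.card X := (L z₃).2
  -- card B = L z₂ + 1
  have hBcard : B.card = (L z₂ : ℕ) + 1 := by
    have hsplit : B = insert z₂ (univ.filter (fun y => (L y : ℕ) < (L z₂ : ℕ))) := by
      ext y
      simp only [hmemB, Finset.mem_insert, Finset.mem_filter, Finset.mem_univ, true_and]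
      constructor
      · intro hy
        rcases Nat.lt_or_ge (L y : ℕ) (L z₂ : ℕ) with h' | h'
        · exact Or.inr h'
        · left
          have : (L y : ℕ) = (L z₂ : ℕ) := le_antisymm hy h'
          exact L.injective (Fin.val_injective this)
      · rintro (rfl | hy)
        · exact le_refl _
        · exact le_of_lt hy
    rw [hsplit, Finset.card_insert_of_notMem (by simp), posid]
  have hz2B : z₂ ∈ B := hmemB.mpr (le_refl _)
  have hcap : ∀ y ∈ B, ¬ z₂ < y := by
    intro y hy hcon
    have := hmono _ _ hcon
    have h1 := hmemB.mp hy
    omega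
  -- c3
  have hc3 : (B.filter (fun y => z₁ < y)).card ≤ a := by
    have : (B.filter (fun y => z₁ < y)).card ≤ (Finset.Ioc (L z₁ : ℕ) (L z₂ : ℕ)).card := by
      apply Finset.card_le_card_of_injOn (fun y => (L y : ℕ))
      · intro y hy
        simp only [Finset.mem_coe, Finset.mem_filter] at hy
        have h1 := hmemB.mp hy.1
        have h2 := hmono _ _ hy.2
        simp only [Finset.mem_coe, Finset.mem_Ioc]
        exact ⟨h2, h1⟩
      · intro y1 _ y2 _ he
        exact L.injective (Fin.val_injective he)
    rwa [Nat.card_Ioc, e2, Nat.add_sub_cancel_left] at this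
  -- c4
  have hc4 : a + (univ.filter (fun y => y < z₁)).card + 1 ≤ B.card := by
    have hβ : (univ.filter (fun y => y < z₁)).card ≤ (L z₁ : ℕ) := by
      have : (univ.filter (fun y => y < z₁)).card ≤ (Finset.range (L z₁ : ℕ)).card := by
        apply Finset.card_le_card_of_injOn (fun y => (L y : ℕ))
        · intro y hy
          simp only [Finset.mem_coe, Finset.mem_filter, Finset.mem_univ, true_and] at hy
          simp only [Finset.mem_coe, Finset.mem_range]
          exact hmono _ _ hy
        · intro y1 _ y2 _ he
          exact L.injective (Fin.val_injective he)
      simpa using this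
    omega
  -- c5
  have hc5 : B.card + (univ.filter (fun y => z₃ < y)).card + b ≤ Fintype.card X := by
    have hUp : (univ.filter (fun y => z₃ < y)).card ≤ (Finset.Ioo (L z₃ : ℕ) (Fintype.card X)).card := by
      apply Finset.card_le_card_of_injOn (fun y => (L y : ℕ))
      · intro y hy
        simp only [Finset.mem_coe, Finset.mem_filter, Finset.mem_univ, true_and] at hy
        simp only [Finset.mem_coe, Finset.mem_Ioo]
        exact ⟨hmono _ _ hy, (L y).2⟩
      · intro y1 _ y2 _ he
        exact L.injective (Fin.val_injective he)
    rw [Nat.card_Ioo] at hUp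
    omega
  -- c6
  have hc6 : (univ.filter (fun y => y < z₃)).card + 1 ≤ (B.filter (fun y => y < z₃)).card + b := by
    have h1 : (univ.filter (fun y => y < z₃)) ∩ B = B.filter (fun y => y < z₃) := by
      ext y; simp [Finset.mem_filter, Finset.mem_inter, and_comm]
    have hsplit := Finset.card_inter_add_card_sdiff (univ.filter (fun y => y < z₃)) B
    rw [h1] at hsplit
    have hdiff : ((univ.filter (fun y => y < z₃)) \ B).card ≤ (Finset.Ioo (L z₂ : ℕ) (L z₃ : ℕ)).card := by
      apply Finset.card_le_card_of_injOn (fun y => (L y : ℕ))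
      · intro y hy
        have h1 := Finset.mem_sdiff.mp hy
        have h2 : y < z₃ := (Finset.mem_filter.mp h1.1).2
        have h3 : ¬ (L y : ℕ) ≤ (L z₂ : ℕ) := fun hcon => h1.2 (hmemB.mpr hcon)
        simp only [Finset.mem_coe, Finset.mem_Ioo]
        exact ⟨by omega, hmono _ _ h2⟩
      · intro y1 _ y2 _ he
        exact L.injective (Fin.val_injective he)
    rw [Nat.card_Ioo, e3, Nat.add_sub_cancel_left] at hdiff
    omega
  exact ⟨B, hBideal, hz2B, hcap, hc3, hc4, hc5, hc6⟩

/-- The key combinatorial step, target (k+1, l). -/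
lemma key1 (z₁ z₂ z₃ : X) (k l : ℕ)
    (B₀ B₁ : Finset X) (hB₀ : IsIdeal B₀) (h₀ : Cond z₁ z₂ z₃ (k+1) (l+1) B₀)
    (hB₁ : IsIdeal B₁) (h₁ : Cond z₁ z₂ z₃ k l B₁) :
    ∃ B : Finset X, IsIdeal B ∧ Cond z₁ z₂ z₃ (k+1) l B := by
  by_cases hcase : (k+1) + (univ.filter (fun y => y < z₁)).card + 1 ≤ B₁.card
  · exact ⟨B₁, hB₁, h₁.mem, h₁.cap, le_trans h₁.c3 (by omega), hcase,
      by have := h₁.c5; omega, h₁.c6⟩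
  · -- B₁ is one short; add a minimal element of B₀ \ B₁
    have hlt : B₁.card < B₀.card := by
      have := h₀.c4; have := h₁.c4; omega
    have hne : (B₀ \ B₁).Nonempty := by
      rw [Finset.sdiff_nonempty]
      intro hsub
      exact absurd (Finset.card_le_card hsub) (by omega)
    obtain ⟨y, hy, hymin⟩ : ∃ y ∈ B₀ \ B₁, ∀ x ∈ B₀ \ B₁, ¬ x < y :=
      let ⟨y, hm⟩ := Finset.exists_minimal hne; ⟨y, hm.prop, fun x hx => hm.not_lt hx⟩
    have hyB₀ : y ∈ B₀ := (Finset.mem_sdiff.mp hy).1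
    have hyB₁ : y ∉ B₁ := (Finset.mem_sdiff.mp hy).2
    have hideal : IsIdeal (insert y B₁) := by
      intro x w hw hxw
      rcases Finset.mem_insert.mp hw with rfl | hwB
      · have hxB₀ : x ∈ B₀ := hB₀ hyB₀ hxw
        by_cases hxB₁ : x ∈ B₁
        · exact Finset.mem_insert_of_mem hxB₁
        · exact absurd hxw (hymin x (Finset.mem_sdiff.mpr ⟨hxB₀, hxB₁⟩))
      · exact Finset.mem_insert_of_mem (hB₁ hwB hxw)
    refine ⟨insert y B₁, hideal, Finset.mem_insert_of_mem h₁.mem, ?_, ?_, ?_, ?_, ?_⟩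
    · intro w hw
      rcases Finset.mem_insert.mp hw with rfl | hwB
      · exact h₀.cap w hyB₀
      · exact h₁.cap w hwB
    · calc ((insert y B₁).filter (fun t => z₁ < t)).card
          ≤ (insert y (B₁.filter (fun t => z₁ < t))).card := by
            apply Finset.card_le_card
            intro t ht
            have h' := Finset.mem_filter.mp ht
            rcases Finset.mem_insert.mp h'.1 with rfl | htB
            · exact Finset.mem_insert_self _ _
            · exact Finset.mem_insert_of_mem (Finset.mem_filter.mpr ⟨htB, h'.2⟩)
      _ ≤ (B₁.filter (fun t => z₁ < t)).card + 1 := Finset.card_insert_le _ _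
      _ ≤ k + 1 := by have := h₁.c3; omega
    · rw [Finset.card_insert_of_notMem hyB₁]
      have := h₁.c4; omega
    · rw [Finset.card_insert_of_notMem hyB₁]
      have hc50 := h₀.c5
      have : B₁.card + 1 ≤ B₀.card := hlt
      omega
    · have hsub : B₁.filter (fun t => t < z₃) ⊆ (insert y B₁).filter (fun t => t < z₃) := by
        intro t ht
        have h' := Finset.mem_filter.mp ht
        exact Finset.mem_filter.mpr ⟨Finset.mem_insert_of_mem h'.1, h'.2⟩
      have := Finset.card_le_card hsub
      have := h₁.c6
      omega

/-- The key combinatorial step, target (k, l+1). -/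
lemma key2 (z₁ z₂ z₃ : X) (k l : ℕ)
    (B₀ B₁ : Finset X) (hB₀ : IsIdeal B₀) (h₀ : Cond z₁ z₂ z₃ (k+1) (l+1) B₀)
    (hB₁ : IsIdeal B₁) (h₁ : Cond z₁ z₂ z₃ k l B₁) :
    ∃ B : Finset X, IsIdeal B ∧ Cond z₁ z₂ z₃ k (l+1) B := by
  by_cases hcase : B₁.card + (univ.filter (fun y => z₃ < y)).card + (l+1) ≤ Fintype.card X
  · exact ⟨B₁, hB₁, h₁.mem, h₁.cap, h₁.c3, by have := h₁.c4; omega, hcase,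
      by have := h₁.c6; omega⟩
  · -- B₁ is one too large; remove a maximal element of B₁ \ B₀
    have hlt : B₀.card < B₁.card := by
      have := h₀.c5; have := h₁.c5; omega
    have hne : (B₁ \ B₀).Nonempty := by
      rw [Finset.sdiff_nonempty]
      intro hsub
      exact absurd (Finset.card_le_card hsub) (by omega)
    obtain ⟨y, hy, hymax⟩ : ∃ y ∈ B₁ \ B₀, ∀ x ∈ B₁ \ B₀, ¬ y < x :=
      let ⟨y, hm⟩ := Finset.exists_maximal hne; ⟨y, hm.prop, fun x hx => hm.not_gt hx⟩
    have hyB₁ : y ∈ B₁ := (Finset.mem_sdiff.mp hy).1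
    have hyB₀ : y ∉ B₀ := (Finset.mem_sdiff.mp hy).2
    have hymaxB₁ : ∀ w ∈ B₁, ¬ y < w := by
      intro w hw hcon
      by_cases hwB₀ : w ∈ B₀
      · exact hyB₀ (hB₀ hwB₀ hcon)
      · exact hymax w (Finset.mem_sdiff.mpr ⟨hw, hwB₀⟩) hcon
    have hideal : IsIdeal (B₁.erase y) := by
      intro x w hw hxw
      have hwB : w ∈ B₁ := Finset.mem_of_mem_erase hw
      refine Finset.mem_erase.mpr ⟨?_, hB₁ hwB hxw⟩
      rintro rfl
      exact hymaxB₁ w hwB hxw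
    have hyz₂ : y ≠ z₂ := by rintro rfl; exact hyB₀ h₀.mem
    refine ⟨B₁.erase y, hideal, Finset.mem_erase.mpr ⟨Ne.symm hyz₂, h₁.mem⟩, ?_, ?_, ?_, ?_, ?_⟩
    · intro w hw
      exact h₁.cap w (Finset.mem_of_mem_erase hw)
    · calc ((B₁.erase y).filter (fun t => z₁ < t)).card
          ≤ (B₁.filter (fun t => z₁ < t)).card := by
            apply Finset.card_le_card
            intro t ht
            have h' := Finset.mem_filter.mp ht
            exact Finset.mem_filter.mpr ⟨Finset.mem_of_mem_erase h'.1, h'.2⟩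
      _ ≤ k := h₁.c3
    · rw [Finset.card_erase_of_mem hyB₁]
      have := h₀.c4
      omega
    · rw [Finset.card_erase_of_mem hyB₁]
      have := h₁.c5
      omega
    · have hsub : B₁.filter (fun t => t < z₃) ⊆ insert y ((B₁.erase y).filter (fun t => t < z₃)) := by
        intro t ht
        have h' := Finset.mem_filter.mp ht
        by_cases hty : t = y
        · subst hty; exact Finset.mem_insert_self _ _
        · exact Finset.mem_insert_of_mem
            (Finset.mem_filter.mpr ⟨Finset.mem_erase.mpr ⟨hty, h'.1⟩, h'.2⟩)
      have h1 := Finset.card_le_card hsub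
      have h2 := Finset.card_insert_le y ((B₁.erase y).filter (fun t => t < z₃))
      have := h₁.c6
      omega

end VE

/-- The number of linear extensions `L` of a finite poset `X`
(order-preserving bijections `X ≃ Fin (card X)`) such that
`L z₂ − L z₁ = k` and `L z₃ − L z₂ = l`. -/
noncomputable def F (X : Type) [PartialOrder X] [Fintype X] (z₁ z₂ z₃ : X) (k l : ℕ) : ℕ :=
  Nat.card {L : X ≃ Fin (Fintype.card X) // (∀ a b : X, a < b → L a < L b) ∧
    (L z₂ : ℕ) = (L z₁ : ℕ) + k ∧ (L z₃ : ℕ) = (L z₂ : ℕ) + l}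

theorem vanish_either (X : Type) [PartialOrder X] [Fintype X]
    (z₁ z₂ z₃ : X) (h12 : z₁ < z₂) (h23 : z₂ < z₃)
    (k l : ℕ) (hk : 1 ≤ k) (hl : 1 ≤ l)
    (h0 : F X z₁ z₂ z₃ (k + 1) l * F X z₁ z₂ z₃ k (l + 1) = 0) :
    F X z₁ z₂ z₃ k l * F X z₁ z₂ z₃ (k + 1) (l + 1) = 0 := by
  classical
  by_contra hcon
  have hboth : F X z₁ z₂ z₃ k l ≠ 0 ∧ F X z₁ z₂ z₃ (k+1) (l+1) ≠ 0 := mul_ne_zero_iff.mp hcon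
  obtain ⟨⟨L₁, hm₁, e₁2, e₁3⟩⟩ := (Nat.card_ne_zero.mp hboth.1).1
  obtain ⟨⟨L₀, hm₀, e₀2, e₀3⟩⟩ := (Nat.card_ne_zero.mp hboth.2).1
  obtain ⟨B₁, hB₁, hc₁⟩ := ext_to_cond z₁ z₂ z₃ h12 h23 k l hl L₁ hm₁ e₁2 e₁3
  obtain ⟨B₀, hB₀, hc₀⟩ := ext_to_cond z₁ z₂ z₃ h12 h23 (k+1) (l+1) (by omega) L₀ hm₀ e₀2 e₀3
  obtain ⟨Ba, hBa, hca⟩ := key1 z₁ z₂ z₃ k l B₀ B₁ hB₀ hc₀ hB₁ hc₁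
  obtain ⟨Bb, hBb, hcb⟩ := key2 z₁ z₂ z₃ k l B₀ B₁ hB₀ hc₀ hB₁ hc₁
  obtain ⟨La, hma, ea2, ea3⟩ := cond_to_ext z₁ z₂ z₃ h12 h23 (k+1) l Ba hBa hca
  obtain ⟨Lb, hmb, eb2, eb3⟩ := cond_to_ext z₁ z₂ z₃ h12 h23 k (l+1) Bb hBb hcb
  have ha : F X z₁ z₂ z₃ (k+1) l ≠ 0 :=
    Nat.card_ne_zero.mpr ⟨⟨⟨La, hma, ea2, ea3⟩⟩, inferInstance⟩
  have hb : F X z₁ z₂ z₃ k (l+1) ≠ 0 :=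
    Nat.card_ne_zero.mpr ⟨⟨⟨Lb, hmb, eb2, eb3⟩⟩, inferInstance⟩
  rcases mul_eq_zero.mp h0 with h' | h'
  · exact ha h'
  · exact hb h'
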